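/- (Cartan uniqueness theorem for homogeneous varieties.) Let d be a positive integer, let V and W be nonempty homogeneous varieties in the open unit ball B_d of C^d, and let F, G : B_d → C^d be holomorphic maps such that F(V) = W, F(0) = 0, G ∘ F restricted to V is the identity of V, and F ∘ G restricted to W is the identity of W. Then there exists a linear map A : C^d → C^d such that A(z) = F(z) for every z ∈ V. -/

import Mathlib

open Metric

/-- `V` is a homogeneous variety in the open unit ball of `ℂ^d`: the common zero set in the
ball of a set of homogeneous polynomials. -/
def IsHomogeneousVariety (d : ℕ) (V : Set (EuclideanSpace ℂ (Fin d))) : Prop :=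
  ∃ S : Set (MvPolynomial (Fin d) ℂ),
    (∀ p ∈ S, ∃ n : ℕ, p.IsHomogeneous n) ∧
    V = {z : EuclideanSpace ℂ (Fin d) |
          z ∈ ball (0 : EuclideanSpace ℂ (Fin d)) 1 ∧
          ∀ p ∈ S, MvPolynomial.eval (fun i => z i) p = 0}

/-- Evaluation of a homogeneous polynomial at a scaled point. -/
lemma eval_smul_of_isHomogeneous {σ : Type*} (p : MvPolynomial σ ℂ) {n : ℕ}
    (hp : p.IsHomogeneous n) (t : ℂ) (x : σ → ℂ) :
    MvPolynomial.eval (fun i => t * x i) p = t ^ n * MvPolynomial.eval x p := by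
  rw [MvPolynomial.eval_eq, MvPolynomial.eval_eq, Finset.mul_sum]
  refine Finset.sum_congr rfl fun s hs => ?_
  have hdeg : s.degree = n := by
    by_contra h
    exact (MvPolynomial.mem_support_iff.mp hs) (hp.coeff_eq_zero h)
  have hprod : (∏ i ∈ s.support, (t * x i) ^ s i)
      = t ^ n * ∏ i ∈ s.support, x i ^ s i := by
    rw [← hdeg, Finsupp.degree,
      Finset.prod_congr rfl fun i _ => mul_pow t (x i) (s i), Finset.prod_mul_distrib,
      Finset.prod_pow_eq_pow_sum]
    rfl
  rw [hprod]; ring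

/-- A homogeneous variety is invariant under scalar multiplication (as long as one stays in
the unit ball). -/
lemma smul_mem_of_isHomogeneousVariety {d : ℕ} {V : Set (EuclideanSpace ℂ (Fin d))}
    (hV : IsHomogeneousVariety d V) {z : EuclideanSpace ℂ (Fin d)} (hz : z ∈ V) (t : ℂ)
    (ht : ‖t • z‖ < 1) : t • z ∈ V := by
  obtain ⟨S, hS, hVeq⟩ := hV
  rw [hVeq] at hz ⊢
  refine ⟨mem_ball_zero_iff.mpr ht, fun p hp => ?_⟩
  obtain ⟨n, hn⟩ := hS p hp
  have hfun : (fun i => (t • z) i) = fun i => t * z i := by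
    funext i
    simp [PiLp.smul_apply, smul_eq_mul]
  rw [hfun, eval_smul_of_isHomogeneous p hn t, hz.2 p hp, mul_zero]

/-- Cartan uniqueness theorem for homogeneous varieties: a zero-preserving biholomorphism
between nonempty homogeneous varieties in the finite-dimensional unit ball agrees with a
linear map on the variety. -/
theorem cartan_uniqueness_homogeneous (d : ℕ) (hd : 0 < d)
    (V W : Set (EuclideanSpace ℂ (Fin d))) (hV : IsHomogeneousVariety d V)
    (hW : IsHomogeneousVariety d W) (hVne : V.Nonempty) (hWne : W.Nonempty)
    (F G : EuclideanSpace ℂ (Fin d) → EuclideanSpace ℂ (Fin d))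
    (hF : DifferentiableOn ℂ F (ball 0 1)) (hG : DifferentiableOn ℂ G (ball 0 1))
    (hFV : F '' V = W) (hF0 : F 0 = 0)
    (hGF : ∀ z ∈ V, G (F z) = z) (hFG : ∀ w ∈ W, F (G w) = w) :
    ∃ A : EuclideanSpace ℂ (Fin d) →ₗ[ℂ] EuclideanSpace ℂ (Fin d), ∀ z ∈ V, A z = F z := by
  classical
  have hVball : V ⊆ ball (0 : EuclideanSpace ℂ (Fin d)) 1 := by
    obtain ⟨S, -, hVeq⟩ := hV
    rw [hVeq]; exact fun z hz => hz.1
  have hWball : W ⊆ ball (0 : EuclideanSpace ℂ (Fin d)) 1 := by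
    obtain ⟨S, -, hWeq⟩ := hW
    rw [hWeq]; exact fun z hz => hz.1
  obtain ⟨z₀, hz₀⟩ := hVne
  have h0V : (0 : EuclideanSpace ℂ (Fin d)) ∈ V := by
    have := smul_mem_of_isHomogeneousVariety hV hz₀ 0 (by simp)
    simpa using this
  have hG0 : G 0 = 0 := by
    have := hGF 0 h0V; rwa [hF0] at this
  have hFW : ∀ z ∈ V, F z ∈ W := fun z hz => hFV ▸ Set.mem_image_of_mem F hz
  have hGV : ∀ w ∈ W, G w ∈ V := by
    intro w hw
    rw [← hFV] at hw
    obtain ⟨z, hz, rfl⟩ := hw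
    rw [hGF z hz]; exact hz
  -- Step 1: `‖G w‖ ≤ ‖w‖` for `w ∈ W`, by the Schwarz lemma along the ray through `w`.
  have hL1 : ∀ w ∈ W, ‖G w‖ ≤ ‖w‖ := by
    intro w hw
    rcases eq_or_ne w 0 with rfl | hw0
    · simp [hG0]
    have hwn : (0 : ℝ) < ‖w‖ := norm_pos_iff.mpr hw0
    have hw1 : ‖w‖ < 1 := mem_ball_zero_iff.mp (hWball hw)
    set uw : EuclideanSpace ℂ (Fin d) := ((‖w‖ : ℂ))⁻¹ • w with huw
    have hwC : ((‖w‖ : ℂ)) ≠ 0 := by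
      simpa using hwn.ne'
    have huwn : ‖uw‖ = 1 := by
      rw [huw, norm_smul, norm_inv, Complex.norm_real, Real.norm_eq_abs,
        abs_of_pos hwn, inv_mul_cancel₀ hwn.ne']
    have hmemW : ∀ μ : ℂ, μ ∈ ball (0 : ℂ) 1 → μ • uw ∈ W := by
      intro μ hμ
      have hrw : μ • uw = (μ * (‖w‖ : ℂ)⁻¹) • w := by rw [huw, smul_smul]
      have hnorm : ‖(μ * (‖w‖ : ℂ)⁻¹) • w‖ < 1 := by
        rw [← hrw, norm_smul, huwn, mul_one]
        exact mem_ball_zero_iff.mp hμ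
      rw [hrw]
      exact smul_mem_of_isHomogeneousVariety hW hw _ hnorm
    set ψ : ℂ → EuclideanSpace ℂ (Fin d) := fun μ => G (μ • uw) with hψ
    have hsmul_mem : ∀ μ : ℂ, μ ∈ ball (0 : ℂ) 1 → μ • uw ∈ ball (0 : EuclideanSpace ℂ (Fin d)) 1 := by
      intro μ hμ
      rw [mem_ball_zero_iff, norm_smul, huwn, mul_one]
      exact mem_ball_zero_iff.mp hμ
    have hψd : DifferentiableOn ℂ ψ (ball 0 1) := by
      apply hG.comp (Differentiable.differentiableOn (by fun_prop))
      intro μ hμ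
      exact hsmul_mem μ hμ
    have hψ0 : ψ 0 = 0 := by simp [hψ, hG0]
    have hψmaps : Set.MapsTo ψ (ball (0 : ℂ) 1) (ball (ψ 0) 1) := by
      rw [hψ0]
      intro μ hμ
      exact hVball (hGV _ (hmemW μ hμ))
    have hwb : ((‖w‖ : ℂ)) ∈ ball (0 : ℂ) 1 := by
      rw [mem_ball_zero_iff, Complex.norm_real, Real.norm_eq_abs, abs_of_pos hwn]
      exact hw1
    have := Complex.dist_le_div_mul_dist_of_mapsTo_ball hψd (hψmaps.mono_right ball_subset_closedBall) hwb
    rw [hψ0, dist_zero_right, dist_zero_right, div_one, one_mul] at this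
    have hval : ψ ((‖w‖ : ℂ)) = G w := by
      show G (((‖w‖ : ℂ)) • uw) = G w
      rw [huw, smul_smul, mul_inv_cancel₀ hwC, one_smul]
    rw [hval] at this
    calc ‖G w‖ ≤ ‖((‖w‖ : ℂ))‖ := this
    _ = ‖w‖ := by rw [Complex.norm_real, Real.norm_eq_abs, abs_of_pos hwn]
  -- The candidate linear map: the derivative of `F` at `0`.
  have hFat0 : DifferentiableAt ℂ F 0 :=
    hF.differentiableAt (isOpen_ball.mem_nhds (by simp))
  set A : EuclideanSpace ℂ (Fin d) →L[ℂ] EuclideanSpace ℂ (Fin d) := fderiv ℂ F 0 with hA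
  refine ⟨A.toLinearMap, ?_⟩
  intro z hz
  rcases eq_or_ne z 0 with rfl | hz0
  · simp [hF0]
  have hzn : (0 : ℝ) < ‖z‖ := norm_pos_iff.mpr hz0
  have hz1 : ‖z‖ < 1 := mem_ball_zero_iff.mp (hVball hz)
  have hzC : ((‖z‖ : ℂ)) ≠ 0 := by simpa using hzn.ne'
  set u : EuclideanSpace ℂ (Fin d) := ((‖z‖ : ℂ))⁻¹ • z with hu
  have hun : ‖u‖ = 1 := by
    rw [hu, norm_smul, norm_inv, Complex.norm_real, Real.norm_eq_abs,
      abs_of_pos hzn, inv_mul_cancel₀ hzn.ne']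
  have hmemV : ∀ μ : ℂ, μ ∈ ball (0 : ℂ) 1 → μ • u ∈ V := by
    intro μ hμ
    have hrw : μ • u = (μ * (‖z‖ : ℂ)⁻¹) • z := by rw [hu, smul_smul]
    have hnorm : ‖(μ * (‖z‖ : ℂ)⁻¹) • z‖ < 1 := by
      rw [← hrw, norm_smul, hun, mul_one]
      exact mem_ball_zero_iff.mp hμ
    rw [hrw]
    exact smul_mem_of_isHomogeneousVariety hV hz _ hnorm
  have hsmul_mem : ∀ μ : ℂ, μ ∈ ball (0 : ℂ) 1 → μ • u ∈ ball (0 : EuclideanSpace ℂ (Fin d)) 1 := by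
    intro μ hμ
    rw [mem_ball_zero_iff, norm_smul, hun, mul_one]
    exact mem_ball_zero_iff.mp hμ
  set φ : ℂ → EuclideanSpace ℂ (Fin d) := fun μ => F (μ • u) with hφ
  have hφd : DifferentiableOn ℂ φ (ball 0 1) := by
    apply hF.comp (Differentiable.differentiableOn (by fun_prop))
    intro μ hμ
    exact hsmul_mem μ hμ
  have hφ0 : φ 0 = 0 := by simp [hφ, hF0]
  have hφmaps : Set.MapsTo φ (ball (0 : ℂ) 1) (ball (φ 0) 1) := by
    rw [hφ0]
    intro μ hμ
    exact hWball (hFW _ (hmemV μ hμ))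
  have hhalf : (2⁻¹ : ℂ) ∈ ball (0 : ℂ) 1 := by
    rw [mem_ball_zero_iff]
    norm_num
  -- upper bound from the Schwarz lemma
  have hupper : ‖φ (2⁻¹ : ℂ)‖ ≤ 2⁻¹ := by
    have := Complex.dist_le_div_mul_dist_of_mapsTo_ball hφd (hφmaps.mono_right ball_subset_closedBall) hhalf
    rw [hφ0, dist_zero_right, dist_zero_right, div_one, one_mul] at this
    simpa using this
  -- lower bound from `hL1`
  have hlower : (2⁻¹ : ℝ) ≤ ‖φ (2⁻¹ : ℂ)‖ := by
    have hmem : ((2⁻¹ : ℂ)) • u ∈ V := hmemV _ hhalf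
    have h1 : G (φ (2⁻¹ : ℂ)) = ((2⁻¹ : ℂ)) • u := by
      rw [hφ]
      exact hGF _ hmem
    have h2 : ‖G (φ (2⁻¹ : ℂ))‖ ≤ ‖φ (2⁻¹ : ℂ)‖ := hL1 _ (hFW _ hmem)
    rw [h1, norm_smul, hun, mul_one] at h2
    simpa using h2
  have hφnorm : ‖φ (2⁻¹ : ℂ)‖ = 2⁻¹ := le_antisymm hupper hlower
  -- equality in the Schwarz lemma
  have hslope : ‖dslope φ 0 (2⁻¹ : ℂ)‖ = 1 / 1 := by
    rw [dslope_of_ne _ (by norm_num : (2⁻¹ : ℂ) ≠ 0), slope_def_module, norm_smul, hφ0,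
      sub_zero, sub_zero, norm_inv, hφnorm]
    norm_num
  have haffine := Complex.affine_of_mapsTo_ball_of_exists_norm_dslope_eq_div hφd (hφmaps.mono_right ball_subset_closedBall)
    hhalf hslope
  set cv : EuclideanSpace ℂ (Fin d) := dslope φ 0 (2⁻¹ : ℂ) with hcv
  have hφeq : ∀ μ ∈ ball (0 : ℂ) 1, φ μ = μ • cv := by
    intro μ hμ
    have := haffine hμ
    simpa [hφ0] using this
  -- identify `cv` with `A u` by differentiating at `0`
  have hAu : A u = cv := by
    have hinner : HasDerivAt (fun μ : ℂ => μ • u) u 0 := by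
      simpa using (hasDerivAt_id (0 : ℂ)).smul_const u
    have h1 : HasDerivAt φ (A u) 0 := by
      have hF' : HasFDerivAt F A ((0 : ℂ) • u) := by
        rw [zero_smul]; exact hFat0.hasFDerivAt
      have := hF'.comp_hasDerivAt 0 hinner
      exact this
    have heventually : φ =ᶠ[nhds (0 : ℂ)] fun μ => μ • cv := by
      filter_upwards [isOpen_ball.mem_nhds (by simp : (0 : ℂ) ∈ ball (0 : ℂ) 1)] with μ hμ
      exact hφeq μ hμ
    have h2 : HasDerivAt (fun μ : ℂ => μ • cv) cv 0 := by
      simpa using (hasDerivAt_id (0 : ℂ)).smul_const cv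
    have h1' : HasDerivAt φ cv 0 := h2.congr_of_eventuallyEq heventually
    exact h1.unique h1'
  -- conclude
  have hzu : ((‖z‖ : ℂ)) • u = z := by
    rw [hu, smul_smul, mul_inv_cancel₀ hzC, one_smul]
  have hzb : ((‖z‖ : ℂ)) ∈ ball (0 : ℂ) 1 := by
    rw [mem_ball_zero_iff, Complex.norm_real, Real.norm_eq_abs, abs_of_pos hzn]
    exact hz1
  have hFz : F z = ((‖z‖ : ℂ)) • cv := by
    have h := hφeq ((‖z‖ : ℂ)) hzb
    have h2 : φ ((‖z‖ : ℂ)) = F z := by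
      show F (((‖z‖ : ℂ)) • u) = F z
      rw [hzu]
    rw [h2] at h
    exact h
  calc (A.toLinearMap) z = A (((‖z‖ : ℂ)) • u) := by rw [hzu]; rfl
  _ = ((‖z‖ : ℂ)) • A u := by rw [map_smul]
  _ = ((‖z‖ : ℂ)) • cv := by rw [hAu]
  _ = F z := hFz.symm
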